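/- Let x = α₁α₂…αₜ be a balanced word over {a,b} (i.e., φ(x) = 0, where φ(a)=2, φ(b)=−2), and let n ≥ 1. Let y = α₁ⁿα₂ⁿ…αₜⁿ be the word obtained by repeating each letter of x exactly n times in place. Then w(y) = n²·w(x), where w denotes the sum of φ over all nonempty prefixes. -/

import Mathlib

/-- A word over the alphabet {a,b} is a list of booleans: `true` = a, `false` = b. -/
abbrev Word := List Bool

/-- φ(a) = 2, φ(b) = -2, extended additively to words. -/
def phi (y : Word) : ℤ := (y.map (fun c => if c then (2 : ℤ) else -2)).sum

/-- The width of a word: the sum of φ over all nonempty prefixes. -/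
def wd (y : Word) : ℤ := ∑ i ∈ Finset.range y.length, phi (y.take (i + 1))

lemma phi_append (u v : Word) : phi (u ++ v) = phi u + phi v := by
  simp [phi]

lemma phi_replicate (n : ℕ) (c : Bool) :
    phi (List.replicate n c) = n * (if c then (2:ℤ) else -2) := by
  simp [phi, List.map_replicate, mul_comm]

lemma wd_append (u v : Word) :
    wd (u ++ v) = wd u + v.length * phi u + wd v := by
  unfold wd
  rw [List.length_append, Finset.sum_range_add]
  have h1 : ∑ i ∈ Finset.range u.length, phi ((u ++ v).take (i + 1)) =
      ∑ i ∈ Finset.range u.length, phi (u.take (i + 1)) := by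
    apply Finset.sum_congr rfl
    intro i hi
    rw [Finset.mem_range] at hi
    rw [List.take_append_of_le_length (by omega)]
  have h2 : ∑ i ∈ Finset.range v.length, phi ((u ++ v).take (u.length + i + 1)) =
      ∑ i ∈ Finset.range v.length, (phi u + phi (v.take (i + 1))) := by
    apply Finset.sum_congr rfl
    intro i hi
    have h : u.length + i + 1 = u.length + (i + 1) := by omega
    rw [h, List.take_length_add_append, phi_append]
  rw [h1, h2, Finset.sum_add_distrib, Finset.sum_const, Finset.card_range]
  push_cast
  ring

lemma wd_single (c : Bool) : wd [c] = (if c then (2:ℤ) else -2) := by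
  simp [wd, phi]

lemma wd_replicate (n : ℕ) (c : Bool) :
    2 * wd (List.replicate n c) = n * (n + 1) * (if c then (2:ℤ) else -2) := by
  induction n with
  | zero => simp [wd]
  | succ m ih =>
    rw [List.replicate_succ', wd_append, wd_single, phi_replicate]
    simp only [List.length_cons, List.length_nil]
    push_cast
    cases c <;> simp at ih ⊢ <;> nlinarith [ih]

lemma len_flatMap (x : Word) (n : ℕ) :
    (x.flatMap (fun c => List.replicate n c)).length = n * x.length := by
  induction x with
  | nil => simp
  | cons d l ihl => simp [List.flatMap_cons, List.length_append, ihl]; ring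

lemma key (x : Word) (n : ℕ) :
    2 * wd (x.flatMap (fun c => List.replicate n c)) =
      2 * n ^ 2 * wd x + ((n : ℤ) - n ^ 2) * phi x := by
  induction x with
  | nil => simp [wd, phi]
  | cons c x' ih =>
    rw [List.flatMap_cons, wd_append, phi_replicate]
    have hlen : (x'.flatMap (fun c => List.replicate n c)).length = n * x'.length := by
      exact len_flatMap x' n
    have hwdc : wd (c :: x') = (x'.length + 1) * (if c then (2:ℤ) else -2) + wd x' := by
      have : (c :: x') = [c] ++ x' := rfl
      rw [this, wd_append, wd_single]
      simp [phi]
      split <;> push_cast <;> ring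
    have hphic : phi (c :: x') = (if c then (2:ℤ) else -2) + phi x' := by
      simp [phi]
    rw [hwdc, hphic, hlen]
    have h2 := wd_replicate n c
    push_cast
    nlinarith [ih, h2]

theorem width_repeat_balanced (x : Word) (n : ℕ) (hn : 1 ≤ n) (hx : phi x = 0) :
    wd (x.flatMap (fun c => List.replicate n c)) = (n : ℤ) ^ 2 * wd x := by
  have := key x n
  rw [hx] at this
  linarith
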